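/- Let γ > 0 be a constant and let b : ℝ → ℝ be continuously differentiable on [0, ∞) with b(t) > 0 for all t ≥ 0. Assume lim_{t→∞} b(t) = 0 and lim_{t→∞} b'(t)/b(t) = 0. Then lim_{t→∞} (∫₀ᵗ e^{-γ(t-s)}·b(s) ds) / b(t) = 1/γ. -/

import Mathlib

lemma expInt (c : ℝ) (hc : c ≠ 0) (a t : ℝ) :
    ∫ s in a..t, Real.exp (-c*(t-s)) = (1 - Real.exp (-c*(t-a)))/c := by
  have h : ∀ x ∈ Set.uIcc a t,
      HasDerivAt (fun s => Real.exp (-c*(t-s))/c) (Real.exp (-c*(t-x))) x := by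
    intro x _
    have h1 : HasDerivAt (fun s : ℝ => -c*(t-s)) c x := by
      have : HasDerivAt (fun s : ℝ => -c*t + c*s) c x := by
        simpa using ((hasDerivAt_id x).const_mul c).const_add (-c*t)
      convert this using 2 with s
      ring
    have h2 := (Real.hasDerivAt_exp (-c*(t-x))).comp x h1
    have h3 := h2.div_const c
    simpa [mul_div_assoc, mul_div_cancel_right₀ _ hc] using h3
  rw [intervalIntegral.integral_eq_sub_of_hasDerivAt h
    (Continuous.intervalIntegrable (by fun_prop) _ _)]
  simp
  ring

set_option maxHeartbeats 1000000 in
theorem stmt_2 (γ : ℝ) (hγ : 0 < γ) (b : ℝ → ℝ)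
    (hb : ∀ t ≥ (0:ℝ), DifferentiableAt ℝ b t)
    (hb' : ContinuousOn (deriv b) (Set.Ici (0:ℝ)))
    (hbpos : ∀ t ≥ (0:ℝ), 0 < b t)
    (hb0 : Filter.Tendsto b Filter.atTop (nhds 0))
    (hbq : Filter.Tendsto (fun t => deriv b t / b t) Filter.atTop (nhds 0)) :
    Filter.Tendsto
      (fun t => (∫ s in (0:ℝ)..t, Real.exp (-γ * (t - s)) * b s) / b t)
      Filter.atTop (nhds (1/γ)) := by
  have hbc : ContinuousOn b (Set.Ici (0:ℝ)) :=
    fun x hx => ((hb x hx).continuousAt).continuousWithinAt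
  rw [Metric.tendsto_atTop]
  intro ε hε
  set ε' := ε/2 with hε'def
  have hε' : 0 < ε' := by positivity
  set δ := min (γ/2) (ε'*γ^2/4) with hδdef
  have hδpos : 0 < δ := lt_min (by positivity) (by positivity)
  have hδ1 : δ ≤ γ/2 := min_le_left _ _
  have hδ2 : δ ≤ ε'*γ^2/4 := min_le_right _ _
  have hγδ : 0 < γ - δ := by linarith
  have hγδ' : 0 < γ + δ := by linarith
  obtain ⟨t₁, ht₁⟩ := Metric.tendsto_atTop.1 hbq δ hδpos
  set t₀ := max t₁ 0 with ht₀def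
  have ht₀0 : (0:ℝ) ≤ t₀ := le_max_right _ _
  have hq : ∀ r ≥ t₀, |deriv b r / b r| ≤ δ := by
    intro r hr
    have := ht₁ r (le_trans (le_max_left _ _) hr)
    rw [Real.dist_eq, sub_zero] at this
    exact this.le
  -- log comparison
  have hlog : ∀ s t : ℝ, t₀ ≤ s → s ≤ t →
      b t * Real.exp (-δ*(t-s)) ≤ b s ∧ b s ≤ b t * Real.exp (δ*(t-s)) := by
    intro s t hs hst
    have hmem : ∀ x ∈ Set.Ici t₀, (0:ℝ) ≤ x := fun x hx => le_trans ht₀0 hx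
    have hL : ∀ x ∈ Set.Ici t₀, HasDerivWithinAt (fun r => Real.log (b r))
        (deriv b x / b x) (Set.Ici t₀) x := fun x hx =>
      (((hb x (hmem x hx)).hasDerivAt).log (ne_of_gt (hbpos x (hmem x hx)))).hasDerivWithinAt
    have hbound := Convex.norm_image_sub_le_of_norm_hasDerivWithin_le hL
      (fun x hx => by rw [Real.norm_eq_abs]; exact hq x hx) (convex_Ici t₀)
      (Set.mem_Ici.2 hs) (Set.mem_Ici.2 (le_trans hs hst))
    rw [Real.norm_eq_abs, Real.norm_eq_abs, abs_of_nonneg (by linarith : (0:ℝ) ≤ t - s)]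
      at hbound
    have habs := abs_le.1 hbound
    have hbs := hbpos s (le_trans ht₀0 hs)
    have hbt := hbpos t (le_trans ht₀0 (le_trans hs hst))
    constructor
    · calc b t * Real.exp (-δ*(t-s)) = Real.exp (Real.log (b t) + (-δ*(t-s))) := by
            rw [Real.exp_add, Real.exp_log hbt]
        _ ≤ Real.exp (Real.log (b s)) := Real.exp_le_exp.2 (by nlinarith [habs.2])
        _ = b s := Real.exp_log hbs
    · calc b s = Real.exp (Real.log (b s)) := (Real.exp_log hbs).symm
        _ ≤ Real.exp (Real.log (b t) + δ*(t-s)) := Real.exp_le_exp.2 (by nlinarith [habs.1])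
        _ = b t * Real.exp (δ*(t-s)) := by rw [Real.exp_add, Real.exp_log hbt]
  -- integrability
  have hInt : ∀ t a c : ℝ, 0 ≤ a → a ≤ c →
      IntervalIntegrable (fun s => Real.exp (-γ*(t-s)) * b s) MeasureTheory.volume a c := by
    intro t a c ha hac
    apply ContinuousOn.intervalIntegrable
    apply ContinuousOn.mul
    · exact (Continuous.continuousOn (by fun_prop))
    · exact hbc.mono (by rw [Set.uIcc_of_le hac]; exact fun x hx => le_trans ha hx.1)
  set C := ∫ s in (0:ℝ)..t₀, Real.exp (-γ*(t₀-s)) * b s with hCdef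
  have hC0 : 0 ≤ C := by
    apply intervalIntegral.integral_nonneg ht₀0
    intro u hu
    exact mul_nonneg (Real.exp_nonneg _) (le_of_lt (hbpos u hu.1))
  have hbt₀ := hbpos t₀ ht₀0
  set K := C / b t₀ with hKdef
  have hK0 : 0 ≤ K := div_nonneg hC0 (le_of_lt hbt₀)
  -- main bounds
  have hub : ∀ t ≥ t₀,
      (∫ s in (0:ℝ)..t, Real.exp (-γ*(t-s)) * b s) / b t
        ≤ 1/(γ-δ) + K * Real.exp (-(γ-δ)*(t-t₀)) ∧
      1/(γ+δ) - Real.exp (-(γ-δ)*(t-t₀))/(γ+δ)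
        ≤ (∫ s in (0:ℝ)..t, Real.exp (-γ*(t-s)) * b s) / b t := by
    intro t ht
    have hbt := hbpos t (le_trans ht₀0 ht)
    have hΔ : (0:ℝ) ≤ t - t₀ := by linarith
    have hsplit : (∫ s in (0:ℝ)..t, Real.exp (-γ*(t-s)) * b s)
        = (∫ s in (0:ℝ)..t₀, Real.exp (-γ*(t-s)) * b s)
          + ∫ s in t₀..t, Real.exp (-γ*(t-s)) * b s :=
      (intervalIntegral.integral_add_adjacent_intervals
        (hInt t 0 t₀ le_rfl ht₀0) (hInt t t₀ t ht₀0 ht)).symm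
    have hA : (∫ s in (0:ℝ)..t₀, Real.exp (-γ*(t-s)) * b s)
        = Real.exp (-γ*(t-t₀)) * C := by
      rw [hCdef, ← intervalIntegral.integral_const_mul]
      apply intervalIntegral.integral_congr
      intro s _
      show Real.exp (-γ*(t-s)) * b s = Real.exp (-γ*(t-t₀)) * (Real.exp (-γ*(t₀-s)) * b s)
      rw [← mul_assoc, ← Real.exp_add]
      ring_nf
    have hBub : (∫ s in t₀..t, Real.exp (-γ*(t-s)) * b s)
        ≤ b t * ((1 - Real.exp (-(γ-δ)*(t-t₀)))/(γ-δ)) := by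
      have hmono : ∀ s ∈ Set.Icc t₀ t,
          Real.exp (-γ*(t-s)) * b s ≤ b t * Real.exp (-(γ-δ)*(t-s)) := by
        intro s hs
        have h2 := (hlog s t hs.1 hs.2).2
        calc Real.exp (-γ*(t-s)) * b s
            ≤ Real.exp (-γ*(t-s)) * (b t * Real.exp (δ*(t-s))) :=
              mul_le_mul_of_nonneg_left h2 (Real.exp_nonneg _)
          _ = b t * Real.exp (-(γ-δ)*(t-s)) := by
              rw [← mul_assoc, mul_comm _ (b t), mul_assoc, ← Real.exp_add]
              ring_nf
      calc (∫ s in t₀..t, Real.exp (-γ*(t-s)) * b s)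
          ≤ ∫ s in t₀..t, b t * Real.exp (-(γ-δ)*(t-s)) :=
            intervalIntegral.integral_mono_on ht (hInt t t₀ t ht₀0 ht)
              (Continuous.intervalIntegrable (by fun_prop) _ _) hmono
        _ = b t * ((1 - Real.exp (-(γ-δ)*(t-t₀)))/(γ-δ)) := by
            rw [intervalIntegral.integral_const_mul, expInt _ (ne_of_gt hγδ)]
    have hBlb : b t * ((1 - Real.exp (-(γ+δ)*(t-t₀)))/(γ+δ))
        ≤ ∫ s in t₀..t, Real.exp (-γ*(t-s)) * b s := by
      have hmono : ∀ s ∈ Set.Icc t₀ t,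
          b t * Real.exp (-(γ+δ)*(t-s)) ≤ Real.exp (-γ*(t-s)) * b s := by
        intro s hs
        have h2 := (hlog s t hs.1 hs.2).1
        calc b t * Real.exp (-(γ+δ)*(t-s))
            = Real.exp (-γ*(t-s)) * (b t * Real.exp (-δ*(t-s))) := by
              rw [← mul_assoc, mul_comm _ (b t), mul_assoc, ← Real.exp_add]
              ring_nf
          _ ≤ Real.exp (-γ*(t-s)) * b s :=
              mul_le_mul_of_nonneg_left h2 (Real.exp_nonneg _)
      calc b t * ((1 - Real.exp (-(γ+δ)*(t-t₀)))/(γ+δ))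
          = ∫ s in t₀..t, b t * Real.exp (-(γ+δ)*(t-s)) := by
            rw [intervalIntegral.integral_const_mul, expInt _ (ne_of_gt hγδ')]
        _ ≤ _ := intervalIntegral.integral_mono_on ht
              (Continuous.intervalIntegrable (by fun_prop) _ _)
              (hInt t t₀ t ht₀0 ht) hmono
    have hbtlb : b t₀ * Real.exp (-δ*(t-t₀)) ≤ b t := by
      have h := (hlog t₀ t le_rfl ht).2
      have he : Real.exp (δ*(t-t₀)) * Real.exp (-δ*(t-t₀)) = 1 := by
        rw [← Real.exp_add, show δ*(t-t₀) + -δ*(t-t₀) = 0 from by ring, Real.exp_zero]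
      have h2 := mul_le_mul_of_nonneg_right h (Real.exp_nonneg (-δ*(t-t₀)))
      calc b t₀ * Real.exp (-δ*(t-t₀)) ≤ b t * Real.exp (δ*(t-t₀)) * Real.exp (-δ*(t-t₀)) := h2
        _ = b t := by rw [mul_assoc, he, mul_one]
    -- tail over b t bound
    have htail : Real.exp (-γ*(t-t₀)) * C / b t ≤ K * Real.exp (-(γ-δ)*(t-t₀)) := by
      rw [div_le_iff₀ hbt]
      have key : Real.exp (-(γ-δ)*(t-t₀)) * Real.exp (-δ*(t-t₀))
          = Real.exp (-γ*(t-t₀)) := by rw [← Real.exp_add]; ring_nf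
      have hKb : K * b t₀ = C := div_mul_cancel₀ C (ne_of_gt hbt₀)
      have h1 : K * Real.exp (-(γ-δ)*(t-t₀)) * (b t₀ * Real.exp (-δ*(t-t₀)))
          ≤ K * Real.exp (-(γ-δ)*(t-t₀)) * b t :=
        mul_le_mul_of_nonneg_left hbtlb (mul_nonneg hK0 (Real.exp_nonneg _))
      calc Real.exp (-γ*(t-t₀)) * C
          = K * Real.exp (-(γ-δ)*(t-t₀)) * (b t₀ * Real.exp (-δ*(t-t₀))) := by
            rw [show K * Real.exp (-(γ-δ)*(t-t₀)) * (b t₀ * Real.exp (-δ*(t-t₀)))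
              = (K * b t₀) * (Real.exp (-(γ-δ)*(t-t₀)) * Real.exp (-δ*(t-t₀))) from by ring,
              hKb, key]
            ring
        _ ≤ _ := h1
    constructor
    · rw [hsplit, hA, add_div]
      have hBd : (∫ s in t₀..t, Real.exp (-γ*(t-s)) * b s) / b t
          ≤ (1 - Real.exp (-(γ-δ)*(t-t₀)))/(γ-δ) := by
        rw [div_le_iff₀ hbt]
        calc (∫ s in t₀..t, Real.exp (-γ*(t-s)) * b s)
            ≤ b t * ((1 - Real.exp (-(γ-δ)*(t-t₀)))/(γ-δ)) := hBub
          _ = (1 - Real.exp (-(γ-δ)*(t-t₀)))/(γ-δ) * b t := by ring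
      have h1 : (1 - Real.exp (-(γ-δ)*(t-t₀)))/(γ-δ) ≤ 1/(γ-δ) := by
        gcongr
        · linarith [Real.exp_nonneg (-(γ-δ)*(t-t₀))]
      linarith
    · rw [hsplit, add_div]
      have hA0 : 0 ≤ (∫ s in (0:ℝ)..t₀, Real.exp (-γ*(t-s)) * b s) / b t := by
        rw [hA]
        exact div_nonneg (mul_nonneg (Real.exp_nonneg _) hC0) hbt.le
      have hBd : (1 - Real.exp (-(γ+δ)*(t-t₀)))/(γ+δ)
          ≤ (∫ s in t₀..t, Real.exp (-γ*(t-s)) * b s) / b t := by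
        rw [le_div_iff₀ hbt]
        calc (1 - Real.exp (-(γ+δ)*(t-t₀)))/(γ+δ) * b t
            = b t * ((1 - Real.exp (-(γ+δ)*(t-t₀)))/(γ+δ)) := by ring
          _ ≤ _ := hBlb
      have hee : Real.exp (-(γ+δ)*(t-t₀)) ≤ Real.exp (-(γ-δ)*(t-t₀)) :=
        Real.exp_le_exp.2 (by nlinarith)
      have h1 : 1/(γ+δ) - Real.exp (-(γ-δ)*(t-t₀))/(γ+δ)
          ≤ (1 - Real.exp (-(γ+δ)*(t-t₀)))/(γ+δ) := by
        rw [← sub_div]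
        gcongr
      linarith
  -- accuracy of δ
  have hγx : (1/γ) * γ = 1 := by field_simp
  have hγx0 : 0 < 1/γ := by positivity
  have hacc1 : 1/(γ-δ) ≤ 1/γ + ε'/2 := by
    rw [div_le_iff₀ hγδ]
    nlinarith [mul_le_mul_of_nonneg_right hδ2 hγx0.le, hγx, hδ1, hε'.le, hγ.le,
      mul_nonneg hε'.le hγ.le]
  have hacc2 : 1/γ - ε'/2 ≤ 1/(γ+δ) := by
    rw [le_div_iff₀ hγδ']
    nlinarith [mul_le_mul_of_nonneg_right hδ2 hγx0.le, hγx, hδ1, hε'.le, hγ.le,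
      mul_nonneg hε'.le hγ.le, hδpos.le]
  -- E → 0
  have hE : Filter.Tendsto (fun t => Real.exp (-(γ-δ)*(t-t₀))) Filter.atTop (nhds 0) := by
    apply Real.tendsto_exp_atBot.comp
    have h1 : Filter.Tendsto (fun t : ℝ => -(γ-δ)*t) Filter.atTop Filter.atBot :=
      Filter.Tendsto.const_mul_atTop_of_neg (by linarith) Filter.tendsto_id
    have h2 := Filter.tendsto_atBot_add_const_right Filter.atTop ((γ-δ)*t₀) h1
    have heq : (fun t : ℝ => -(γ-δ)*(t-t₀)) = fun t => -(γ-δ)*t + (γ-δ)*t₀ := by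
      funext t; ring
    rw [heq]
    exact h2
  set M := K + 1/(γ+δ) + 1 with hMdef
  have hM : 0 < M := by positivity
  obtain ⟨T, hT⟩ := Metric.tendsto_atTop.1 hE (ε'/(2*M)) (by positivity)
  refine ⟨max T t₀, fun t ht => ?_⟩
  have ht' : t₀ ≤ t := le_trans (le_max_right _ _) ht
  have hTt : T ≤ t := le_trans (le_max_left _ _) ht
  obtain ⟨hu1, hu2⟩ := hub t ht'
  have hEt : Real.exp (-(γ-δ)*(t-t₀)) < ε'/(2*M) := by
    have := hT t hTt
    rwa [Real.dist_eq, sub_zero, abs_of_nonneg (Real.exp_nonneg _)] at this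
  have hE0 : 0 ≤ Real.exp (-(γ-δ)*(t-t₀)) := Real.exp_nonneg _
  have c0 : M * Real.exp (-(γ-δ)*(t-t₀)) < ε'/2 := by
    calc M * Real.exp (-(γ-δ)*(t-t₀)) < M * (ε'/(2*M)) := by
          exact mul_lt_mul_of_pos_left hEt hM
      _ = ε'/2 := by
          rw [mul_div_assoc', mul_comm M ε', mul_div_mul_right _ _ (ne_of_gt hM)]
  have c1 : K * Real.exp (-(γ-δ)*(t-t₀)) < ε'/2 :=
    lt_of_le_of_lt (mul_le_mul_of_nonneg_right (by
      have h0 : 0 ≤ 1/(γ+δ) := by positivity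
      rw [hMdef]
      linarith) hE0) c0
  have c2 : Real.exp (-(γ-δ)*(t-t₀))/(γ+δ) < ε'/2 := by
    refine lt_of_le_of_lt ?_ c0
    rw [div_eq_mul_inv, ← one_div]
    calc Real.exp (-(γ-δ)*(t-t₀)) * (1/(γ+δ))
        ≤ Real.exp (-(γ-δ)*(t-t₀)) * M := by
          apply mul_le_mul_of_nonneg_left _ hE0
          rw [hMdef]
          linarith [hK0]
      _ = M * Real.exp (-(γ-δ)*(t-t₀)) := by ring
  rw [Real.dist_eq, abs_sub_lt_iff]
  have hgoal1 : (∫ s in (0:ℝ)..t, Real.exp (-γ * (t - s)) * b s) / b t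
      ≤ 1/(γ-δ) + K * Real.exp (-(γ-δ)*(t-t₀)) := hu1
  have hgoal2 : 1/(γ+δ) - Real.exp (-(γ-δ)*(t-t₀))/(γ+δ)
      ≤ (∫ s in (0:ℝ)..t, Real.exp (-γ * (t - s)) * b s) / b t := hu2
  constructor <;> [skip; skip] <;> linarith
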